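/- arXiv:2403.17666 — 3 statements merged into one kernel-verified Lean document; each statement's English description precedes it below -/
import Mathlib

section
/- Let K = ℚ(√2) and let Φ(x₁,...,x₅) = x₁² + x₂² + x₃² - √2·x₄² - √2·x₅² be a quadratic form with coefficients in K. If x₁,...,x₅ ∈ K satisfy Φ(x₁,...,x₅) = 0, then x₁ = x₂ = x₃ = x₄ = x₅ = 0. In other words, Φ does not represent 0 over K non-trivially. -/
lemma rat_add_rat_sqrt2_eq_zero {a b : ℚ} (h : (a : ℝ) + b * Real.sqrt 2 = 0) :
    a = 0 ∧ b = 0 := by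
  by_cases hb : b = 0
  · subst hb
    simp at h
    exact ⟨by exact_mod_cast h, rfl⟩
  · exfalso
    apply irrational_sqrt_two
    refine ⟨-a / b, ?_⟩
    have hb' : (b : ℝ) ≠ 0 := by exact_mod_cast hb
    push_cast
    field_simp
    linarith
lemma sub_rat_sqrt2_eq_zero {a b : ℚ} (h : (a : ℝ) - b * Real.sqrt 2 = 0) :
    a = 0 ∧ b = 0 := by
  have := rat_add_rat_sqrt2_eq_zero (a := a) (b := -b) (by push_cast; linarith)
  exact ⟨this.1, by simpa using this.2⟩

lemma mem_adjoin_sqrt2 {x : ℝ} (hx : x ∈ IntermediateField.adjoin ℚ {Real.sqrt 2}) :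
    ∃ a b : ℚ, x = a + b * Real.sqrt 2 := by
  have s2 : Real.sqrt 2 * Real.sqrt 2 = 2 := Real.mul_self_sqrt (by norm_num)
  induction hx using IntermediateField.adjoin_induction with
  | mem y hy =>
      rw [Set.mem_singleton_iff] at hy
      exact ⟨0, 1, by simp [hy]⟩
  | algebraMap r => exact ⟨r, 0, by simp⟩
  | add y z hy hz ihy ihz =>
      obtain ⟨a, b, rfl⟩ := ihy
      obtain ⟨c, d, rfl⟩ := ihz
      exact ⟨a + c, b + d, by push_cast; ring⟩
  | mul y z hy hz ihy ihz =>
      obtain ⟨a, b, rfl⟩ := ihy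
      obtain ⟨c, d, rfl⟩ := ihz
      refine ⟨a * c + 2 * b * d, a * d + b * c, ?_⟩
      push_cast
      linear_combination ((b : ℝ) * d) * s2
  | inv y hy ihy =>
      obtain ⟨a, b, rfl⟩ := ihy
      by_cases h0 : (a : ℝ) + b * Real.sqrt 2 = 0
      · exact ⟨0, 0, by simp [h0]⟩
      · have hd : ((a : ℝ) ^ 2 - 2 * b ^ 2) ≠ 0 := by
          intro hc
          have : ((a : ℝ) - b * Real.sqrt 2) * ((a : ℝ) + b * Real.sqrt 2) = 0 := by
            linear_combination (-(b : ℝ) ^ 2) * s2 + hc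
          rcases mul_eq_zero.mp this with h1 | h2
          · obtain ⟨ha, hb⟩ := sub_rat_sqrt2_eq_zero (a := a) (b := b) h1
            apply h0; simp [ha, hb]
          · exact h0 h2
        refine ⟨a / (a ^ 2 - 2 * b ^ 2), -b / (a ^ 2 - 2 * b ^ 2), ?_⟩
        have hmul : ((a : ℝ) + b * Real.sqrt 2) *
            (((a : ℝ) - b * Real.sqrt 2) / ((a : ℝ) ^ 2 - 2 * b ^ 2)) = 1 := by
          rw [← mul_div_assoc, div_eq_one_iff_eq hd]
          linear_combination (-(b : ℝ) ^ 2) * s2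
        rw [inv_eq_of_mul_eq_one_right hmul]
        push_cast
        field_simp
        ring

/-- The quadratic form `x₁² + x₂² + x₃² - √2·x₄² - √2·x₅²` does not represent `0`
non-trivially over the field `K = ℚ(√2)`. -/
theorem quadratic_form_anisotropic_over_Q_sqrt2
    (x₁ x₂ x₃ x₄ x₅ : ℝ)
    (h₁ : x₁ ∈ IntermediateField.adjoin ℚ {Real.sqrt 2})
    (h₂ : x₂ ∈ IntermediateField.adjoin ℚ {Real.sqrt 2})
    (h₃ : x₃ ∈ IntermediateField.adjoin ℚ {Real.sqrt 2})
    (h₄ : x₄ ∈ IntermediateField.adjoin ℚ {Real.sqrt 2})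
    (h₅ : x₅ ∈ IntermediateField.adjoin ℚ {Real.sqrt 2})
    (h : x₁ ^ 2 + x₂ ^ 2 + x₃ ^ 2 - Real.sqrt 2 * x₄ ^ 2 - Real.sqrt 2 * x₅ ^ 2 = 0) :
    x₁ = 0 ∧ x₂ = 0 ∧ x₃ = 0 ∧ x₄ = 0 ∧ x₅ = 0 := by
  have s2 : Real.sqrt 2 * Real.sqrt 2 = 2 := Real.mul_self_sqrt (by norm_num)
  have s2nn : (0:ℝ) ≤ Real.sqrt 2 := Real.sqrt_nonneg 2
  have s2pos : (0:ℝ) < Real.sqrt 2 := Real.sqrt_pos.mpr (by norm_num)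
  obtain ⟨a₁, b₁, rfl⟩ := mem_adjoin_sqrt2 h₁
  obtain ⟨a₂, b₂, rfl⟩ := mem_adjoin_sqrt2 h₂
  obtain ⟨a₃, b₃, rfl⟩ := mem_adjoin_sqrt2 h₃
  obtain ⟨a₄, b₄, rfl⟩ := mem_adjoin_sqrt2 h₄
  obtain ⟨a₅, b₅, rfl⟩ := mem_adjoin_sqrt2 h₅
  -- rewrite h as A + B √2 = 0 with A B rational
  have key : ((a₁^2 + 2*b₁^2 + a₂^2 + 2*b₂^2 + a₃^2 + 2*b₃^2 - 4*a₄*b₄ - 4*a₅*b₅ : ℚ) : ℝ)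
      + ((2*a₁*b₁ + 2*a₂*b₂ + 2*a₃*b₃ - a₄^2 - 2*b₄^2 - a₅^2 - 2*b₅^2 : ℚ) : ℝ)
        * Real.sqrt 2 = 0 := by
    push_cast
    linear_combination h - ((b₁:ℝ)^2 + b₂^2 + b₃^2 - 2*a₄*b₄ - 2*a₅*b₅
      - (b₄^2 + b₅^2) * Real.sqrt 2) * s2
  obtain ⟨hA0, hB0⟩ := rat_add_rat_sqrt2_eq_zero key
  have hA' : ((a₁:ℝ)^2 + 2*b₁^2 + a₂^2 + 2*b₂^2 + a₃^2 + 2*b₃^2 - 4*a₄*b₄ - 4*a₅*b₅) = 0 := by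
    exact_mod_cast congrArg (fun q : ℚ => (q : ℝ)) hA0
  have hB' : (2*(a₁:ℝ)*b₁ + 2*a₂*b₂ + 2*a₃*b₃ - a₄^2 - 2*b₄^2 - a₅^2 - 2*b₅^2) = 0 := by
    exact_mod_cast congrArg (fun q : ℚ => (q : ℝ)) hB0
  -- conjugate equation: sum of nonneg terms is zero
  have conj : ((a₁:ℝ) - b₁ * Real.sqrt 2)^2 + ((a₂:ℝ) - b₂ * Real.sqrt 2)^2
      + ((a₃:ℝ) - b₃ * Real.sqrt 2)^2
      + Real.sqrt 2 * ((a₄:ℝ) - b₄ * Real.sqrt 2)^2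
      + Real.sqrt 2 * ((a₅:ℝ) - b₅ * Real.sqrt 2)^2 = 0 := by
    linear_combination hA' - Real.sqrt 2 * hB' + ((b₁:ℝ)^2 + b₂^2 + b₃^2
      - 2*a₄*b₄ - 2*a₅*b₅ + (b₄^2 + b₅^2) * Real.sqrt 2) * s2
  have t1 : (0:ℝ) ≤ ((a₁:ℝ) - b₁ * Real.sqrt 2)^2 := sq_nonneg _
  have t2 : (0:ℝ) ≤ ((a₂:ℝ) - b₂ * Real.sqrt 2)^2 := sq_nonneg _
  have t3 : (0:ℝ) ≤ ((a₃:ℝ) - b₃ * Real.sqrt 2)^2 := sq_nonneg _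
  have t4 : (0:ℝ) ≤ Real.sqrt 2 * ((a₄:ℝ) - b₄ * Real.sqrt 2)^2 :=
    mul_nonneg s2nn (sq_nonneg _)
  have t5 : (0:ℝ) ≤ Real.sqrt 2 * ((a₅:ℝ) - b₅ * Real.sqrt 2)^2 :=
    mul_nonneg s2nn (sq_nonneg _)
  have e1 : (a₁:ℝ) - b₁ * Real.sqrt 2 = 0 :=
    pow_eq_zero_iff (n := 2) (by norm_num) |>.mp (by linarith)
  have e2 : (a₂:ℝ) - b₂ * Real.sqrt 2 = 0 :=
    pow_eq_zero_iff (n := 2) (by norm_num) |>.mp (by linarith)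
  have e3 : (a₃:ℝ) - b₃ * Real.sqrt 2 = 0 :=
    pow_eq_zero_iff (n := 2) (by norm_num) |>.mp (by linarith)
  have e4 : (a₄:ℝ) - b₄ * Real.sqrt 2 = 0 := by
    have h4' : Real.sqrt 2 * ((a₄:ℝ) - b₄ * Real.sqrt 2)^2 = 0 := by linarith
    rcases mul_eq_zero.mp h4' with h' | h'
    · exact absurd h' (ne_of_gt s2pos)
    · exact pow_eq_zero_iff (n := 2) (by norm_num) |>.mp h'
  have e5 : (a₅:ℝ) - b₅ * Real.sqrt 2 = 0 := by
    have h5' : Real.sqrt 2 * ((a₅:ℝ) - b₅ * Real.sqrt 2)^2 = 0 := by linarith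
    rcases mul_eq_zero.mp h5' with h' | h'
    · exact absurd h' (ne_of_gt s2pos)
    · exact pow_eq_zero_iff (n := 2) (by norm_num) |>.mp h'
  obtain ⟨ha1, hb1⟩ := sub_rat_sqrt2_eq_zero e1
  obtain ⟨ha2, hb2⟩ := sub_rat_sqrt2_eq_zero e2
  obtain ⟨ha3, hb3⟩ := sub_rat_sqrt2_eq_zero e3
  obtain ⟨ha4, hb4⟩ := sub_rat_sqrt2_eq_zero e4
  obtain ⟨ha5, hb5⟩ := sub_rat_sqrt2_eq_zero e5
  refine ⟨?_, ?_, ?_, ?_, ?_⟩ <;>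
    simp [ha1, hb1, ha2, hb2, ha3, hb3, ha4, hb4, ha5, hb5]
end

section
/- Let G be a group, N ⊴ G a normal subgroup, and suppose both N and the quotient G/N are finitely presented. Then G is finitely presented. -/
open Subgroup Function

/-- A group is finitely presented if it is isomorphic to the quotient of a finitely
generated free group by the normal closure of finitely many relations. -/
def FinitelyPresentedGroup (G : Type*) [Group G] : Prop :=
  ∃ (n : ℕ) (rels : Set (FreeGroup (Fin n))), rels.Finite ∧ Nonempty (PresentedGroup rels ≃* G)


private lemma mapNormalClosureLe {G H : Type*} [Group G] [Group H] (f : G →* H)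
    (s : Set G) : Subgroup.map f (Subgroup.normalClosure s) ≤ Subgroup.normalClosure (f '' s) := by
  rw [Subgroup.map_le_iff_le_comap]
  exact Subgroup.normalClosure_le_normal fun x hx =>
    Subgroup.subset_normalClosure (Set.mem_image_of_mem f hx)

private lemma existsPresentation {G : Type*} [Group G] (h : FinitelyPresentedGroup G) :
    ∃ (n : ℕ) (S : Set (FreeGroup (Fin n))) (φ : FreeGroup (Fin n) →* G),
      S.Finite ∧ Function.Surjective φ ∧ φ.ker = Subgroup.normalClosure S := by
  obtain ⟨n, S, hS, ⟨e⟩⟩ := h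
  refine ⟨n, S, e.toMonoidHom.comp (PresentedGroup.mk S), hS, ?_, ?_⟩
  · exact e.surjective.comp (PresentedGroup.mk_surjective S)
  · have hker : (PresentedGroup.mk S).ker = Subgroup.normalClosure S :=
      QuotientGroup.ker_mk' _
    ext x
    simp only [MonoidHom.mem_ker, MonoidHom.coe_comp, Function.comp_apply,
      MulEquiv.coe_toMonoidHom]
    rw [show ((e (PresentedGroup.mk S x) = 1) ↔ (PresentedGroup.mk S x = 1)) from
      ⟨fun hx => e.injective (by simpa using hx), fun hx => by simp [hx]⟩,
      ← MonoidHom.mem_ker, hker]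

private lemma fpOfPresentation {G : Type*} [Group G] {α : Type*} [Fintype α]
    (φ : FreeGroup α →* G) (R : Set (FreeGroup α)) (hR : R.Finite)
    (hsurj : Function.Surjective φ) (hker : φ.ker = Subgroup.normalClosure R) :
    FinitelyPresentedGroup G := by
  classical
  let e : FreeGroup α ≃* FreeGroup (Fin (Fintype.card α)) :=
    FreeGroup.freeGroupCongr (Fintype.equivFin α)
  refine ⟨Fintype.card α, ⇑e '' R, hR.image _, ⟨?_⟩⟩
  have hsurj' : Function.Surjective (φ.comp e.symm.toMonoidHom) :=
    hsurj.comp e.symm.surjective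
  have hker' : (φ.comp e.symm.toMonoidHom).ker = Subgroup.normalClosure (⇑e '' R) := by
    have hmap := Subgroup.map_normalClosure R e.toMonoidHom e.surjective
    rw [show (⇑e '' R) = (⇑e.toMonoidHom '' R) from rfl, ← hmap, ← hker]
    ext x
    simp only [MonoidHom.mem_ker, MonoidHom.coe_comp, Function.comp_apply,
      MulEquiv.coe_toMonoidHom, Subgroup.mem_map]
    constructor
    · intro hx
      exact ⟨e.symm x, hx, by simp⟩
    · rintro ⟨y, hy, rfl⟩
      simpa using hy
  exact (QuotientGroup.quotientMulEquivOfEq hker'.symm).trans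
    (QuotientGroup.quotientKerEquivOfSurjective _ hsurj')

/-- Finite presentability is closed under extensions: if a normal subgroup `N ⊴ G` and the
quotient `G/N` are both finitely presented, then so is `G`. -/
theorem finitelyPresented_of_normal_of_quotient {G : Type*} [Group G]
    (N : Subgroup G) [N.Normal]
    (hN : FinitelyPresentedGroup N) (hQ : FinitelyPresentedGroup (G ⧸ N)) :
    FinitelyPresentedGroup G := by
  classical
  obtain ⟨m, S, ψ, hSfin, hψs, hψk⟩ := existsPresentation hN
  obtain ⟨n, T, χ, hTfin, hχs, hχk⟩ := existsPresentation hQ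
  -- the combined free group
  let inlF : FreeGroup (Fin m) →* FreeGroup (Fin m ⊕ Fin n) := FreeGroup.map Sum.inl
  let inrF : FreeGroup (Fin n) →* FreeGroup (Fin m ⊕ Fin n) := FreeGroup.map Sum.inr
  let ρ : FreeGroup (Fin m ⊕ Fin n) →* FreeGroup (Fin n) :=
    FreeGroup.lift (Sum.elim (fun _ => 1) FreeGroup.of)
  let π : G →* G ⧸ N := QuotientGroup.mk' N
  -- choose lifts of the images of the generators of Q
  have hsec : ∀ j : Fin n, ∃ g : G, π g = χ (FreeGroup.of j) := fun j =>
    QuotientGroup.mk'_surjective N _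
  choose gsec hgsec using hsec
  -- the map to G
  let φ : FreeGroup (Fin m ⊕ Fin n) →* G :=
    FreeGroup.lift (Sum.elim (fun i => ((ψ (FreeGroup.of i) : N) : G)) gsec)
  have hφinl : ∀ z, φ (inlF z) = ((ψ z : N) : G) := by
    intro z
    have h1 : φ.comp inlF = N.subtype.comp ψ := by
      apply FreeGroup.ext_hom
      intro i
      simp [φ, inlF]
    exact DFunLike.congr_fun h1 z
  have hπφ : ∀ u, π (φ u) = χ (ρ u) := by
    intro u
    have h2 : π.comp φ = χ.comp ρ := by
      apply FreeGroup.ext_hom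
      rintro (i | j)
      · have : π ((ψ (FreeGroup.of i) : N) : G) = 1 :=
          (QuotientGroup.eq_one_iff _).mpr (ψ (FreeGroup.of i)).2
        simp [φ, ρ, this]
      · simp [φ, ρ, hgsec j]
    exact DFunLike.congr_fun h2 u
  have hρinr : ∀ v, ρ (inrF v) = v := by
    intro v
    have h3 : ρ.comp inrF = MonoidHom.id _ := by
      apply FreeGroup.ext_hom
      intro j
      simp [ρ, inrF]
    simpa using DFunLike.congr_fun h3 v
  -- lifting elements of N into the image of inlF
  have hNlift : ∀ x : G, x ∈ N → ∃ z, φ (inlF z) = x := by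
    intro x hx
    obtain ⟨z, hz⟩ := hψs ⟨x, hx⟩
    exact ⟨z, by rw [hφinl, hz]⟩
  have hmemN : ∀ u, χ (ρ u) = 1 → φ u ∈ N := by
    intro u hu
    have : π (φ u) = 1 := by rw [hπφ, hu]
    exact (QuotientGroup.eq_one_iff _).mp this
  -- choose words expressing images of the T-relators
  have hTlift : ∀ t, ∃ z, t ∈ T → φ (inlF z) = φ (inrF t) := by
    intro t
    by_cases ht : t ∈ T
    · have hχt : χ t = 1 := by
        rw [← MonoidHom.mem_ker, hχk]
        exact Subgroup.subset_normalClosure ht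
      obtain ⟨z, hz⟩ := hNlift (φ (inrF t)) (hmemN _ (by rw [hρinr, hχt]))
      exact ⟨z, fun _ => hz⟩
    · exact ⟨1, fun h => absurd h ht⟩
  choose wT hwT using hTlift
  -- conjugation relators
  let yb : Fin n → Bool → FreeGroup (Fin m ⊕ Fin n) := fun j b =>
    cond b (FreeGroup.of (Sum.inr j)) (FreeGroup.of (Sum.inr j))⁻¹
  have hconj : ∀ (a : FreeGroup (Fin m ⊕ Fin n)) (i : Fin m),
      ∃ z, φ (inlF z) = φ (a * FreeGroup.of (Sum.inl i) * a⁻¹) := by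
    intro a i
    apply hNlift
    have : φ (a * FreeGroup.of (Sum.inl i) * a⁻¹)
        = φ a * ((ψ (FreeGroup.of i) : N) : G) * (φ a)⁻¹ := by
      have : φ (FreeGroup.of (Sum.inl i)) = ((ψ (FreeGroup.of i) : N) : G) := by
        simpa [inlF] using hφinl (FreeGroup.of i)
      simp [this]
    rw [this]
    exact (inferInstance : N.Normal).conj_mem _ (ψ (FreeGroup.of i)).2 _
  choose dconj hdconj using hconj
  -- the relator set
  let R : Set (FreeGroup (Fin m ⊕ Fin n)) :=
    (⇑inlF '' S) ∪ ((fun t => inrF t * (inlF (wT t))⁻¹) '' T) ∪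
      Set.range (fun p : Fin n × Bool × Fin m =>
        yb p.1 p.2.1 * FreeGroup.of (Sum.inl p.2.2) * (yb p.1 p.2.1)⁻¹ *
          (inlF (dconj (yb p.1 p.2.1) p.2.2))⁻¹)
  have hRfin : R.Finite := ((hSfin.image _).union (hTfin.image _)).union (Set.finite_range _)
  -- R consists of relations
  have hRker : R ⊆ (φ.ker : Set (FreeGroup (Fin m ⊕ Fin n))) := by
    rintro x (hx | hx)
    · rcases hx with hx | hx
      · obtain ⟨s, hs, rfl⟩ := hx
        have : ψ s = 1 := by
          rw [← MonoidHom.mem_ker, hψk]; exact Subgroup.subset_normalClosure hs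
        simp [SetLike.mem_coe, MonoidHom.mem_ker, hφinl, this]
      · obtain ⟨t, ht, rfl⟩ := hx
        simp [SetLike.mem_coe, MonoidHom.mem_ker, hwT t ht]
    · obtain ⟨⟨j, b, i⟩, rfl⟩ := hx
      simp only [SetLike.mem_coe, MonoidHom.mem_ker]
      rw [map_mul, map_inv, hdconj (yb j b) i]
      group
  let K : Subgroup (FreeGroup (Fin m ⊕ Fin n)) := Subgroup.normalClosure R
  have hKker : K ≤ φ.ker := Subgroup.normalClosure_le_normal hRker
  -- the quotient by K and the image of the "N-part"
  let mkK : FreeGroup (Fin m ⊕ Fin n) →* FreeGroup (Fin m ⊕ Fin n) ⧸ K :=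
    QuotientGroup.mk' K
  have hmkK1 : ∀ x, mkK x = 1 ↔ x ∈ K := fun x => QuotientGroup.eq_one_iff x
  let M : Subgroup (FreeGroup (Fin m ⊕ Fin n)) := inlF.range
  let M' : Subgroup (FreeGroup (Fin m ⊕ Fin n) ⧸ K) := M.map mkK
  have hM'mem : ∀ z, mkK (inlF z) ∈ M' := fun z =>
    Subgroup.mem_map_of_mem _ ⟨z, rfl⟩
  have hM'closure : M' = Subgroup.closure
      (Set.range (fun i : Fin m => mkK (FreeGroup.of (Sum.inl i)))) := by
    have h1 : M = Subgroup.closure (Set.range (fun i : Fin m => FreeGroup.of (Sum.inl i))) := by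
      show inlF.range = _
      rw [MonoidHom.range_eq_map, ← FreeGroup.closure_range_of (Fin m),
        MonoidHom.map_closure]
      congr 1
      ext x
      simp [inlF, ← Set.range_comp, Function.comp]
    rw [show M' = Subgroup.map mkK M from rfl, h1, MonoidHom.map_closure]
    congr 1
    ext x
    simp [← Set.range_comp, Function.comp]
  -- conjugation by the generators preserves M'
  have hconjM' : ∀ (j : Fin n) (b : Bool) (h : FreeGroup (Fin m ⊕ Fin n) ⧸ K),
      h ∈ M' → mkK (yb j b) * h * (mkK (yb j b))⁻¹ ∈ M' := by
    intro j b h hh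
    have hle : M' ≤ Subgroup.comap (MulAut.conj (mkK (yb j b))).toMonoidHom M' := by
      conv_lhs => rw [hM'closure]
      rw [Subgroup.closure_le]
      rintro _ ⟨i, rfl⟩
      simp only [SetLike.mem_coe, Subgroup.mem_comap, MulEquiv.coe_toMonoidHom,
        MulAut.conj_apply]
      have hrel : yb j b * FreeGroup.of (Sum.inl i) * (yb j b)⁻¹ *
          (inlF (dconj (yb j b) i))⁻¹ ∈ K :=
        Subgroup.subset_normalClosure (Or.inr ⟨⟨j, b, i⟩, rfl⟩)
      have h1 : mkK (yb j b * FreeGroup.of (Sum.inl i) * (yb j b)⁻¹)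
          = mkK (inlF (dconj (yb j b) i)) := by
        have := (hmkK1 _).mpr hrel
        rw [map_mul, map_inv] at this
        exact mul_inv_eq_one.mp this
      have heq : mkK (yb j b) * mkK (FreeGroup.of (Sum.inl i)) * (mkK (yb j b))⁻¹
          = mkK (yb j b * FreeGroup.of (Sum.inl i) * (yb j b)⁻¹) := by
        simp [map_mul, map_inv]
      rw [heq, h1]
      exact hM'mem _
    simpa using hle hh
  have hM'normal : M'.Normal := by
    rw [← Subgroup.normalizer_eq_top_iff, eq_top_iff]
    have hgen : Subgroup.closure (⇑mkK '' Set.range FreeGroup.of) = ⊤ := by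
      rw [← MonoidHom.map_closure, FreeGroup.closure_range_of, ← MonoidHom.range_eq_map]
      exact MonoidHom.range_eq_top.2 (QuotientGroup.mk'_surjective _)
    rw [← hgen, Subgroup.closure_le]
    rintro _ ⟨_, ⟨a, rfl⟩, rfl⟩
    rcases a with i | j
    · exact Subgroup.le_normalizer (hM'mem (FreeGroup.of i))
    · simp only [SetLike.mem_coe]
      rw [Subgroup.mem_normalizer_iff]
      intro h
      constructor
      · intro hh
        have := hconjM' j true h hh
        simpa [yb] using this
      · intro hh
        have := hconjM' j false _ hh
        simp only [yb, cond_false, map_inv] at this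
        have heq : (mkK (FreeGroup.of (Sum.inr j)))⁻¹ *
            (mkK (FreeGroup.of (Sum.inr j)) * h * (mkK (FreeGroup.of (Sum.inr j)))⁻¹) *
            ((mkK (FreeGroup.of (Sum.inr j)))⁻¹)⁻¹ = h := by group
        rwa [heq] at this
  -- the subgroup P
  let P : Subgroup (FreeGroup (Fin m ⊕ Fin n)) := M'.comap mkK
  have hPnormal : P.Normal := hM'normal.comap mkK
  have hMP : M ≤ P := fun x hx => Subgroup.mem_map_of_mem _ hx
  have hKP : K ≤ P := by
    intro k hk
    show mkK k ∈ M'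
    rw [(hmkK1 k).mpr hk]
    exact one_mem _
  have hTP : ∀ t ∈ T, inrF t ∈ P := by
    intro t ht
    have h1 : inrF t * (inlF (wT t))⁻¹ ∈ P :=
      hKP (Subgroup.subset_normalClosure (Or.inl (Or.inr ⟨t, ht, rfl⟩)))
    have h2 : inlF (wT t) ∈ P := hMP ⟨wT t, rfl⟩
    have := mul_mem h1 h2
    simpa using this
  -- every element is congruent mod P to its inr-part
  let σ : FreeGroup (Fin m ⊕ Fin n) →* FreeGroup (Fin m ⊕ Fin n) := inrF.comp ρ
  have hstep : ∀ u, u * (σ u)⁻¹ ∈ P := by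
    have hq : (QuotientGroup.mk' P).comp σ = QuotientGroup.mk' P := by
      apply FreeGroup.ext_hom
      rintro (i | j)
      · have h1 : σ (FreeGroup.of (Sum.inl i)) = 1 := by simp [σ, ρ, inrF]
        have h2 : QuotientGroup.mk' P (FreeGroup.of (Sum.inl i)) = 1 :=
          (QuotientGroup.eq_one_iff _).mpr (hMP ⟨FreeGroup.of i, by simp [inlF]⟩)
        simp [h1, h2]
      · simp [σ, ρ, inrF]
    intro u
    have h1 : QuotientGroup.mk' P (σ u) = QuotientGroup.mk' P u :=
      DFunLike.congr_fun hq u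
    have : QuotientGroup.mk' P (u * (σ u)⁻¹) = 1 := by
      rw [map_mul, map_inv, h1]; group
    exact (QuotientGroup.eq_one_iff _).mp this
  have hσP : ∀ u, χ (ρ u) = 1 → σ u ∈ P := by
    intro u hu
    have h1 : ρ u ∈ Subgroup.normalClosure T := by rw [← hχk, MonoidHom.mem_ker]; exact hu
    have h2 : σ u ∈ Subgroup.map inrF (Subgroup.normalClosure T) :=
      Subgroup.mem_map_of_mem _ h1
    have h3 : Subgroup.map inrF (Subgroup.normalClosure T)
        ≤ Subgroup.normalClosure (⇑inrF '' T) := mapNormalClosureLe _ _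
    have h4 : Subgroup.normalClosure (⇑inrF '' T) ≤ P := by
      apply Subgroup.normalClosure_le_normal
      rintro _ ⟨t, ht, rfl⟩
      exact hTP t ht
    exact h4 (h3 h2)
  -- kernel computation
  have hker : φ.ker = Subgroup.normalClosure R := by
    apply le_antisymm _ hKker
    intro u hu
    have hφu : φ u = 1 := hu
    have hρu : χ (ρ u) = 1 := by rw [← hπφ, hφu, map_one]
    have huP : u ∈ P := by
      have h1 := hstep u
      have h2 := hσP u hρu
      have h3 : u = (u * (σ u)⁻¹) * σ u := by group
      rw [h3]; exact mul_mem h1 h2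
    obtain ⟨v, hvM, hv⟩ := huP
    obtain ⟨z, rfl⟩ := hvM
    have hdiff : u * (inlF z)⁻¹ ∈ K := by
      rw [← hmkK1]
      rw [map_mul, map_inv, hv]
      group
    have hφz : φ (inlF z) = 1 := by
      have h1 : φ (u * (inlF z)⁻¹) = 1 := hKker hdiff
      rw [map_mul, map_inv, hφu, one_mul, inv_eq_one] at h1
      exact h1
    have hψz : ψ z = 1 := by
      have := hφinl z
      rw [hφz] at this
      exact Subtype.coe_injective this.symm
    have hzK : inlF z ∈ K := by
      have h1 : z ∈ Subgroup.normalClosure S := by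
        rw [← hψk, MonoidHom.mem_ker]; exact hψz
      have h2 : inlF z ∈ Subgroup.normalClosure (⇑inlF '' S) :=
        mapNormalClosureLe inlF S (Subgroup.mem_map_of_mem _ h1)
      exact Subgroup.normalClosure_mono (fun x hx => Or.inl (Or.inl hx)) h2
    have : u = (u * (inlF z)⁻¹) * inlF z := by group
    rw [this]
    exact mul_mem hdiff hzK
  -- surjectivity
  have hsurj : Function.Surjective φ := by
    have hNrange : ∀ x ∈ N, x ∈ φ.range := by
      intro x hx
      obtain ⟨z, hz⟩ := hNlift x hx
      exact ⟨inlF z, hz⟩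
    intro g
    obtain ⟨v, hv⟩ := hχs (π g)
    have h1 : π (φ (inrF v)) = π g := by rw [hπφ, hρinr, hv]
    have h2 : g * (φ (inrF v))⁻¹ ∈ N := by
      have : π (g * (φ (inrF v))⁻¹) = 1 := by rw [map_mul, map_inv, h1]; group
      exact (QuotientGroup.eq_one_iff _).mp this
    obtain ⟨u1, hu1⟩ := hNrange _ h2
    refine ⟨u1 * inrF v, ?_⟩
    rw [map_mul, hu1]
    group
  exact fpOfPresentation φ R hRfin hsurj hker
end

section
/- Let p : G → H be a surjective group homomorphism with finite kernel, and suppose G is finitely presented. Then H is finitely presented. Conversely, if H is finitely presented and ker p is finite, then G is finitely presented. -/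
lemma pure_eq_of' {α : Type*} (x : α) : (pure x : FreeGroup α) = FreeGroup.of x := rfl

lemma fp_of_presentation {G : Type*} [Group G] {α : Type*} [Finite α]
    (φ : FreeGroup α →* G) (s : Set (FreeGroup α)) (hs : s.Finite)
    (hsurj : Function.Surjective φ) (hker : φ.ker = Subgroup.normalClosure s) :
    FinitelyPresentedGroup G := by
  obtain ⟨m, ⟨e⟩⟩ := Finite.exists_equiv_fin α
  refine ⟨m, FreeGroup.freeGroupCongr e '' s, hs.image _, ⟨?_⟩⟩
  refine MulEquiv.trans (PresentedGroup.equivPresentedGroup s e).symm ?_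
  refine MulEquiv.trans (QuotientGroup.quotientMulEquivOfEq hker.symm) ?_
  exact QuotientGroup.quotientKerEquivOfSurjective φ hsurj

lemma fp_presentation {G : Type*} [Group G] (h : FinitelyPresentedGroup G) :
    ∃ (n : ℕ) (φ : FreeGroup (Fin n) →* G) (s : Set (FreeGroup (Fin n))),
      s.Finite ∧ Function.Surjective φ ∧ φ.ker = Subgroup.normalClosure s := by
  obtain ⟨n, rels, hfin, ⟨e⟩⟩ := h
  refine ⟨n, e.toMonoidHom.comp (QuotientGroup.mk' _), rels, hfin, ?_, ?_⟩
  · exact e.surjective.comp (QuotientGroup.mk'_surjective _)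
  · ext x
    show e (QuotientGroup.mk' (Subgroup.normalClosure rels) x) = 1 ↔ _
    exact (map_eq_one_iff _ e.injective).trans (QuotientGroup.eq_one_iff x)

theorem fp_extension {G H : Type*} [Group G] [Group H] (p : G →* H)
    (hsurj : Function.Surjective p) (hker : Finite p.ker)
    (h : FinitelyPresentedGroup H) : FinitelyPresentedGroup G := by
  classical
  obtain ⟨n, ψ, s, hs, hψsurj, hψker⟩ := fp_presentation h
  choose g hg using fun i : Fin n => hsurj (ψ (FreeGroup.of i))
  set K := p.ker with hKdef
  let e : G → K := fun x => if h : x ∈ K then ⟨x, h⟩ else 1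
  have he : ∀ x (hx : x ∈ K), ((e x : K) : G) = x := fun x hx => by simp [e, hx]
  -- conjugation action of G on K
  let cG : G → K → K := fun x k =>
    ⟨x * (k : G) * x⁻¹, Subgroup.Normal.conj_mem (MonoidHom.normal_ker p) _ k.2 x⟩
  have hcGcoe : ∀ x k, ((cG x k : K) : G) = x * (k : G) * x⁻¹ := fun _ _ => rfl
  have hcGmul : ∀ x y k, cG x (cG y k) = cG (x * y) k := fun x y k => by
    apply Subtype.ext; simp [hcGcoe]; group
  have hcG1 : ∀ k, cG 1 k = k := fun k => by apply Subtype.ext; simp [hcGcoe]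
  -- the maps
  let φ : FreeGroup (Fin n ⊕ K) →* G := FreeGroup.lift (Sum.elim g (fun k => (k : G)))
  let ι : FreeGroup (Fin n) →* FreeGroup (Fin n ⊕ K) := FreeGroup.map Sum.inl
  let π : FreeGroup (Fin n ⊕ K) →* FreeGroup (Fin n) :=
    FreeGroup.lift (Sum.elim FreeGroup.of (fun _ => 1))
  have hφl : ∀ i, φ (FreeGroup.of (Sum.inl i)) = g i := fun i => by
    simp [φ, FreeGroup.lift_apply_of]
  have hφr : ∀ k : K, φ (FreeGroup.of (Sum.inr k)) = (k : G) := fun k => by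
    simp [φ, FreeGroup.lift_apply_of]
  have hιof : ∀ i, ι (FreeGroup.of i) = FreeGroup.of (Sum.inl i) := fun i => by
    simp [ι, FreeGroup.map.of]
  have hπl : ∀ i, π (FreeGroup.of (Sum.inl i)) = FreeGroup.of i := fun i => by
    simp [π, FreeGroup.lift_apply_of]
  have hπr : ∀ k : K, π (FreeGroup.of (Sum.inr k)) = 1 := fun k => by
    simp [π, FreeGroup.lift_apply_of]
  have hπι : ∀ u, π (ι u) = u := by
    have : π.comp ι = MonoidHom.id _ := FreeGroup.ext_hom _ _ (fun a => by
      simp [π, ι, FreeGroup.map.of, FreeGroup.lift_apply_of])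
    exact fun u => DFunLike.congr_fun this u
  have hpφ : ∀ w, p (φ w) = ψ (π w) := by
    have : p.comp φ = ψ.comp π := FreeGroup.ext_hom _ _ (fun a => by
      rcases a with i | k
      · simp [φ, π, FreeGroup.lift_apply_of, hg i]
      · simp [φ, π, FreeGroup.lift_apply_of]
        exact k.2)
    exact fun w => DFunLike.congr_fun this w
  have hsK : ∀ r ∈ s, φ (ι r) ∈ K := by
    intro r hr
    have hr' : r ∈ ψ.ker := hψker ▸ Subgroup.subset_normalClosure hr
    show p (φ (ι r)) = 1
    rw [hpφ, hπι]; exact hr'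
  -- relators
  let R1 : Set (FreeGroup (Fin n ⊕ K)) :=
    (fun r => ι r * (FreeGroup.of (Sum.inr (e (φ (ι r)))))⁻¹) '' s
  let R2 : Set (FreeGroup (Fin n ⊕ K)) :=
    Set.range (fun kk : K × K => FreeGroup.of (Sum.inr kk.1) * FreeGroup.of (Sum.inr kk.2) *
      (FreeGroup.of (Sum.inr (kk.1 * kk.2)))⁻¹)
  let R3 : Set (FreeGroup (Fin n ⊕ K)) :=
    Set.range (fun ik : Fin n × K => FreeGroup.of (Sum.inl ik.1) * FreeGroup.of (Sum.inr ik.2) *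
      (FreeGroup.of (Sum.inl ik.1))⁻¹ * (FreeGroup.of (Sum.inr (cG (g ik.1) ik.2)))⁻¹)
  let R := R1 ∪ R2 ∪ R3
  have hRfin : R.Finite :=
    ((hs.image _).union (Set.finite_range _)).union (Set.finite_range _)
  -- φ is surjective
  have hφsurj : Function.Surjective φ := by
    intro x
    obtain ⟨w, hw⟩ := hψsurj (p x)
    have hmem : x * (φ (ι w))⁻¹ ∈ K := by
      show p _ = 1
      rw [map_mul, map_inv, hpφ, hπι, hw]
      simp
    refine ⟨FreeGroup.of (Sum.inr ⟨x * (φ (ι w))⁻¹, hmem⟩) * ι w, ?_⟩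
    rw [map_mul, hφr]
    simp
  -- R is contained in the kernel of φ
  have hRker : Subgroup.normalClosure R ≤ φ.ker := by
    refine Subgroup.normalClosure_le_normal ?_
    rintro x ((⟨r, hr, rfl⟩ | ⟨⟨k, k'⟩, rfl⟩) | ⟨⟨i, k⟩, rfl⟩)
    · show φ _ = 1
      rw [map_mul, map_inv, hφr, he _ (hsK r hr)]
      simp
    · show φ _ = 1
      simp only [map_mul, map_inv, hφr]
      push_cast
      group
    · show φ _ = 1
      simp only [map_mul, map_inv, hφl, hφr, hcGcoe]
      group
  -- the quotient
  let q : FreeGroup (Fin n ⊕ K) →* _ := QuotientGroup.mk' (Subgroup.normalClosure R)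
  have hq1 : ∀ w ∈ R, q w = 1 := fun w hw =>
    (QuotientGroup.eq_one_iff w).2 (Subgroup.subset_normalClosure hw)
  -- K maps multiplicatively into the quotient
  have hKbmul : ∀ k k' : K, q (FreeGroup.of (Sum.inr (k * k'))) =
      q (FreeGroup.of (Sum.inr k)) * q (FreeGroup.of (Sum.inr k')) := by
    intro k k'
    have := hq1 _ (Set.mem_union_left _ (Set.mem_union_right _ ⟨(k, k'), rfl⟩))
    rw [map_mul, map_mul, map_inv, mul_inv_eq_one] at this
    rw [← this]
  let Kb : K →* _ := MonoidHom.mk' (fun k => q (FreeGroup.of (Sum.inr k))) hKbmul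
  have hKb : ∀ k : K, Kb k = q (FreeGroup.of (Sum.inr k)) := fun _ => rfl
  -- conjugation relation in the quotient
  have hL3 : ∀ (i : Fin n) (k : K),
      q (FreeGroup.of (Sum.inl i)) * Kb k * (q (FreeGroup.of (Sum.inl i)))⁻¹ =
        Kb (cG (g i) k) := by
    intro i k
    have := hq1 _ (Set.mem_union_right _ ⟨(i, k), rfl⟩)
    rw [map_mul, map_mul, map_mul, map_inv, map_inv, mul_inv_eq_one] at this
    rw [hKb, hKb, ← this]
  have hL4 : ∀ (u : FreeGroup (Fin n)) (k : K),
      q (ι u) * Kb k * (q (ι u))⁻¹ = Kb (cG (φ (ι u)) k) := by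
    intro u
    induction u using FreeGroup.induction_on with
    | C1 => intro k; simp [hcG1]
    | of i =>
      intro k
      simp only [pure_eq_of', hιof, hφl]
      exact hL3 i k
    | inv_of i _ =>
      intro k
      simp only [pure_eq_of', map_inv, hιof, hφl]
      have h1 := hL3 i (cG (g i)⁻¹ k)
      rw [hcGmul, mul_inv_cancel, hcG1] at h1
      rw [← h1]
      group
    | mul x y ihx ihy =>
      intro k
      rw [map_mul ι, map_mul q, map_mul φ, ← hcGmul]
      rw [← ihx (cG (φ (ι y)) k), ← ihy k]
      group
  have hL4' : ∀ (u : FreeGroup (Fin n)) (k : K),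
      (q (ι u))⁻¹ * Kb k * q (ι u) = Kb (cG (φ (ι u))⁻¹ k) := by
    intro u k
    have h1 := hL4 u (cG (φ (ι u))⁻¹ k)
    rw [hcGmul, mul_inv_cancel, hcG1] at h1
    rw [← h1]; group
  -- every element is (image of a word in the first factor) times a K-letter, mod relations
  have hL5 : ∀ w : FreeGroup (Fin n ⊕ K), ∃ k : K, q w = q (ι (π w)) * Kb k := by
    intro w
    induction w using FreeGroup.induction_on with
    | C1 => exact ⟨1, by simp⟩
    | of a =>
      rcases a with i | k
      · refine ⟨1, ?_⟩
        simp only [pure_eq_of', hπl, hιof, map_one, mul_one]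
      · refine ⟨k, ?_⟩
        simp only [pure_eq_of', hπr, map_one, one_mul, hKb]
    | inv_of a ih =>
      obtain ⟨k, hk⟩ := ih
      refine ⟨cG (φ (ι (π (FreeGroup.of a)))) k⁻¹, ?_⟩
      rw [map_inv q, hk, map_inv π, map_inv ι, map_inv q, ← hL4, map_inv Kb]
      group
    | mul x y ihx ihy =>
      obtain ⟨k, hk⟩ := ihx
      obtain ⟨k', hk'⟩ := ihy
      refine ⟨cG (φ (ι (π y)))⁻¹ k * k', ?_⟩
      rw [map_mul q, hk, hk', map_mul π, map_mul ι, map_mul q, map_mul Kb, ← hL4' (π y) k]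
      group
  -- words of the first factor lying in the normal closure of s become K-letters
  have hL6 : ∀ v ∈ Subgroup.normalClosure s, ∃ k : K, q (ι v) = Kb k := by
    intro v hv
    refine Subgroup.closure_induction (p := fun v _ => ∃ k : K, q (ι v) = Kb k)
      ?_ ⟨1, by simp⟩ ?_ ?_ hv
    · intro x hx
      obtain ⟨a, ha, hconj⟩ := Group.mem_conjugatesOfSet_iff.1 hx
      obtain ⟨c, hc⟩ := isConj_iff.1 hconj
      have hqa : q (ι a) = Kb (e (φ (ι a))) := by
        have := hq1 _ (Set.mem_union_left _ (Set.mem_union_left _ ⟨a, ha, rfl⟩))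
        rw [map_mul, map_inv, mul_inv_eq_one] at this
        rw [this, hKb]
      refine ⟨cG (φ (ι c)) (e (φ (ι a))), ?_⟩
      rw [← hc, map_mul, map_mul, map_inv, map_mul, map_mul, map_inv, hqa, ← hL4]
    · rintro x y hx hy ⟨k, hk⟩ ⟨k', hk'⟩
      exact ⟨k * k', by rw [map_mul, map_mul, map_mul, hk, hk']⟩
    · rintro x hx ⟨k, hk⟩
      exact ⟨k⁻¹, by rw [map_inv, map_inv, hk, map_inv]⟩
  -- the induced map on the quotient
  let Φ := QuotientGroup.lift (Subgroup.normalClosure R) φ (fun w hw => hRker hw)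
  have hΦq : ∀ w, Φ (q w) = φ w := fun w => rfl
  -- kernel computation
  refine fp_of_presentation φ R hRfin hφsurj (le_antisymm ?_ hRker)
  intro x hx
  obtain ⟨k, hk⟩ := hL5 x
  have hπx : π x ∈ Subgroup.normalClosure s := by
    rw [← hψker]
    show ψ (π x) = 1
    rw [← hpφ, hx, map_one]
  obtain ⟨k', hk'⟩ := hL6 _ hπx
  have hqx : q x = Kb (k' * k) := by rw [hk, hk', map_mul]
  have hcoe : ((k' * k : K) : G) = 1 := by
    have := hΦq x
    rw [hqx] at this
    rw [hx] at this
    rw [hKb] at this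
    have h2 : Φ (q (FreeGroup.of (Sum.inr (k' * k)))) = φ (FreeGroup.of (Sum.inr (k' * k))) := rfl
    rw [h2, hφr] at this
    exact this
  have : (k' * k : K) = 1 := Subtype.ext (by simpa using hcoe)
  have hqx1 : q x = 1 := by rw [hqx, this, map_one]
  exact (QuotientGroup.eq_one_iff x).1 hqx1

theorem fp_quotient {G H : Type*} [Group G] [Group H] (p : G →* H)
    (hsurj : Function.Surjective p) (hker : Finite p.ker)
    (h : FinitelyPresentedGroup G) : FinitelyPresentedGroup H := by
  obtain ⟨n, φ, s, hs, hφsurj, hφker⟩ := fp_presentation h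
  choose c hc using fun k : p.ker => hφsurj (k : G)
  refine fp_of_presentation (p.comp φ) (s ∪ Set.range c) (hs.union (Set.finite_range c))
    (hsurj.comp hφsurj) ?_
  apply le_antisymm
  · intro x hx
    have hx' : φ x ∈ p.ker := hx
    have h1 : x * (c ⟨φ x, hx'⟩)⁻¹ ∈ φ.ker := by
      simp [MonoidHom.mem_ker, hc ⟨φ x, hx'⟩]
    have h2 : x * (c ⟨φ x, hx'⟩)⁻¹ ∈ Subgroup.normalClosure (s ∪ Set.range c) := by
      exact Subgroup.normalClosure_mono Set.subset_union_left (hφker ▸ h1)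
    have h3 : c ⟨φ x, hx'⟩ ∈ Subgroup.normalClosure (s ∪ Set.range c) :=
      Subgroup.subset_normalClosure (Set.mem_union_right _ ⟨_, rfl⟩)
    simpa using mul_mem h2 h3
  · refine Subgroup.normalClosure_le_normal ?_
    rintro x (hx | ⟨k, rfl⟩)
    · have : x ∈ φ.ker := hφker ▸ Subgroup.subset_normalClosure hx
      simp [MonoidHom.mem_ker] at this ⊢
      simp [this]
    · simp [MonoidHom.mem_ker, hc k, k.2]
      exact k.2

/-- If `p : G → H` is a surjective group homomorphism with finite kernel, then `G` is
finitely presented if and only if `H` is. -/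
theorem finitelyPresented_iff_of_surjective_finite_ker {G H : Type*} [Group G] [Group H]
    (p : G →* H) (hsurj : Function.Surjective p) (hker : Finite p.ker) :
    (FinitelyPresentedGroup G → FinitelyPresentedGroup H) ∧
      (FinitelyPresentedGroup H → FinitelyPresentedGroup G) :=
  ⟨fp_quotient p hsurj hker, fp_extension p hsurj hker⟩
end
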